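/- If f and g are convex, closed, proper, lower semicontinuous functions on R^n, then f ≤_Q g if and only if g* ≤_P f*, where f ≤_Q g means: for all x in dom(f), y in dom(g), and δ₁ with 0 ≤ δ₁ ≤ (x−y)⁺, there exists δ₂ with 0 ≤ δ₂ ≤ (x−y)⁻ such that f(x−δ₁+δ₂) + g(y+δ₁−δ₂) ≤ f(x) + g(y); and g* ≤_P f* means: for all p in dom(g*), p' in dom(f*), g*(p∧p') + f*(p∨p') ≤ g*(p) + f*(p'). -/

import Mathlib

noncomputable section

/-- Legendre–Fenchel conjugate of an extended-real-valued function on `Fin n → ℝ`. -/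
def conjE {n : ℕ} (f : (Fin n → ℝ) → EReal) (p : Fin n → ℝ) : EReal :=
  ⨆ x : Fin n → ℝ, ((∑ i, p i * x i : ℝ) : EReal) - f x

/-- Componentwise positive part. -/
def posP {n : ℕ} (a : Fin n → ℝ) : Fin n → ℝ := fun i => max (a i) 0

/-- Componentwise negative part. -/
def negP {n : ℕ} (a : Fin n → ℝ) : Fin n → ℝ := fun i => max (-a i) 0

/-- Convexity for extended-real-valued functions. -/
def ConvexE {n : ℕ} (f : (Fin n → ℝ) → EReal) : Prop :=
  ∀ x y : Fin n → ℝ, ∀ t : ℝ, 0 ≤ t → t ≤ 1 →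
    f (t • x + (1 - t) • y) ≤ (t : EReal) * f x + ((1 - t : ℝ) : EReal) * f y

/-- Properness. -/
def ProperE {n : ℕ} (f : (Fin n → ℝ) → EReal) : Prop :=
  (∀ x, f x ≠ ⊥) ∧ (∃ x, f x ≠ ⊤)

/-- The Q-order on functions: `f ≤_Q g`. -/
def QleF {n : ℕ} (f g : (Fin n → ℝ) → EReal) : Prop :=
  ∀ x y : Fin n → ℝ, f x ≠ ⊤ → g y ≠ ⊤ →
    ∀ δ₁ : Fin n → ℝ, 0 ≤ δ₁ → δ₁ ≤ posP (x - y) →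
      ∃ δ₂ : Fin n → ℝ, 0 ≤ δ₂ ∧ δ₂ ≤ negP (x - y) ∧
        f (x - δ₁ + δ₂) + g (y + δ₁ - δ₂) ≤ f x + g y

/-- The P-order on functions: `φ ≤_P φ'`. -/
def PleF {n : ℕ} (φ φ' : (Fin n → ℝ) → EReal) : Prop :=
  ∀ p p' : Fin n → ℝ, φ p ≠ ⊤ → φ' p' ≠ ⊤ →
    φ (p ⊓ p') + φ' (p ⊔ p') ≤ φ p + φ' p'

open Filter Topology Metric Set
open scoped Classical

namespace QPaux

lemma top_le_of_forall_real {c : EReal} (h : ∀ r : ℝ, (r : EReal) ≤ c) : (⊤ : EReal) ≤ c := by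
  induction c using EReal.rec with
  | bot => simpa using h 0
  | coe r => have := h (r+1); rw [EReal.coe_le_coe_iff] at this; linarith
  | top => exact le_rfl

lemma add_ne_bot {a b : EReal} (ha : a ≠ ⊥) (hb : b ≠ ⊥) : a + b ≠ ⊥ := by
  simp [EReal.add_eq_bot_iff, ha, hb]

/-- If `a + b ≤ c` can be tested against all real pairs below `a` and `b`. -/
lemma add_le_of_forall_real {a b c : EReal}
    (h : ∀ u v : ℝ, (u : EReal) < a → (v : EReal) < b → ((u + v : ℝ) : EReal) ≤ c) :
    a + b ≤ c := by
  induction a using EReal.rec with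
  | bot => simp
  | top =>
    induction b using EReal.rec with
    | bot => simp
    | coe b =>
      rw [EReal.top_add_of_ne_bot (EReal.coe_ne_bot b)]
      refine top_le_of_forall_real fun r => ?_
      have := h (r - (b-1)) (b-1) (EReal.coe_lt_top _) (by exact_mod_cast (by linarith : b - 1 < b))
      simpa using this
    | top =>
      rw [EReal.top_add_top]
      refine top_le_of_forall_real fun r => ?_
      have := h r 0 (EReal.coe_lt_top _) (EReal.coe_lt_top _)
      simpa using this
  | coe a =>
    induction b using EReal.rec with
    | bot => simp
    | coe b =>
      rw [← EReal.coe_add]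
      by_contra hlt
      push_neg at hlt
      induction c using EReal.rec with
      | bot =>
        have := h (a-1) (b-1) (by exact_mod_cast (by linarith : a-1 < a))
          (by exact_mod_cast (by linarith : b-1 < b))
        exact (EReal.coe_ne_bot _) (le_bot_iff.mp this)
      | top => exact absurd hlt (by simp)
      | coe c =>
        rw [EReal.coe_lt_coe_iff] at hlt
        set ε := (a + b - c)/3 with hε
        have hε0 : 0 < ε := by linarith [hlt]
        have := h (a - ε) (b - ε) (by exact_mod_cast (by linarith : a - ε < a))
          (by exact_mod_cast (by linarith : b - ε < b))
        rw [EReal.coe_le_coe_iff] at this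
        linarith
    | top =>
      rw [EReal.add_top_of_ne_bot (EReal.coe_ne_bot a)]
      refine top_le_of_forall_real fun r => ?_
      have := h (a-1) (r - (a-1)) (by exact_mod_cast (by linarith : a-1 < a)) (EReal.coe_lt_top _)
      simpa using this


/-- Pairwise bound gives bound on sum of suprema. -/
lemma iSup_add_iSup_le {ι κ : Type*} {F : ι → EReal} {G : κ → EReal} {c : EReal}
    (h : ∀ a b, F a + G b ≤ c) : (⨆ a, F a) + (⨆ b, G b) ≤ c := by
  refine add_le_of_forall_real fun u v hu hv => ?_
  rw [lt_iSup_iff] at hu hv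
  obtain ⟨a, ha⟩ := hu
  obtain ⟨b, hb⟩ := hv
  calc ((u + v : ℝ) : EReal) = (u : EReal) + (v : EReal) := by rw [EReal.coe_add]
    _ ≤ F a + G b := add_le_add ha.le hb.le
    _ ≤ c := h a b

lemma exists_reals_lt_add {a b : EReal} (ha : a ≠ ⊥) (hb : b ≠ ⊥) {y : ℝ}
    (h : (y : EReal) < a + b) :
    ∃ s₁ s₂ : ℝ, (s₁ : EReal) < a ∧ (s₂ : EReal) < b ∧ y < s₁ + s₂ := by
  induction a using EReal.rec with
  | bot => exact absurd rfl ha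
  | coe a =>
    induction b using EReal.rec with
    | bot => exact absurd rfl hb
    | coe b =>
      rw [← EReal.coe_add, EReal.coe_lt_coe_iff] at h
      set ε := (a + b - y)/3 with hε
      exact ⟨a - ε, b - ε, by exact_mod_cast (by linarith : a - ε < a),
        by exact_mod_cast (by linarith : b - ε < b), by linarith⟩
    | top =>
      exact ⟨a - 1, y - a + 2, by exact_mod_cast (by linarith : a - 1 < a),
        EReal.coe_lt_top _, by linarith⟩
  | top =>
    induction b using EReal.rec with
    | bot => exact absurd rfl hb
    | coe b =>
      exact ⟨y - b + 2, b - 1, EReal.coe_lt_top _,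
        by exact_mod_cast (by linarith : b - 1 < b), by linarith⟩
    | top => exact ⟨y, 1, EReal.coe_lt_top _, EReal.coe_lt_top _, by linarith⟩

lemma ne_top_of_add_le_coe_left {a b : EReal} {r : ℝ} (hb : b ≠ ⊥) (h : a + b ≤ (r : EReal)) :
    a ≠ ⊤ := by
  intro hA
  rw [hA, EReal.top_add_of_ne_bot hb] at h
  exact (not_le.2 (EReal.coe_lt_top r)) h

/-- values of a sum below a real are both real -/
lemma reals_of_add_le_coe {a b : EReal} (ha : a ≠ ⊥) (hb : b ≠ ⊥) {r : ℝ}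
    (h : a + b ≤ (r : EReal)) :
    ∃ u v : ℝ, a = (u : EReal) ∧ b = (v : EReal) ∧ u + v ≤ r := by
  have hat : a ≠ ⊤ := ne_top_of_add_le_coe_left hb h
  have hbt : b ≠ ⊤ := by
    intro hB
    rw [hB, EReal.add_top_of_ne_bot ha] at h
    exact (not_le.2 (EReal.coe_lt_top r)) h
  lift a to ℝ using ⟨hat, ha⟩
  lift b to ℝ using ⟨hbt, hb⟩
  exact ⟨a, b, rfl, rfl, by exact_mod_cast h⟩

/-- multiply an EReal inequality by a nonneg real -/
lemma coe_mul_le_of_le {t r : ℝ} {A : EReal} (ht : 0 ≤ t) (hA : A ≤ (r : EReal)) :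
    (t : EReal) * A ≤ ((t * r : ℝ) : EReal) := by
  induction A using EReal.rec with
  | bot =>
    rcases eq_or_lt_of_le ht with h0 | h0
    · rw [← h0]; simp [EReal.zero_mul]
    · rw [EReal.coe_mul_bot_of_pos h0]; simp
  | coe A =>
    rw [← EReal.coe_mul, EReal.coe_le_coe_iff]
    exact mul_le_mul_of_nonneg_left (by exact_mod_cast hA) ht
  | top => exact absurd hA (by simp)


lemma lsc_pair {E₁ E₂ : Type*} [TopologicalSpace E₁] [TopologicalSpace E₂]
    {f : E₁ → EReal} {g : E₂ → EReal} (hf : LowerSemicontinuous f) (hg : LowerSemicontinuous g)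
    (hfb : ∀ z, f z ≠ ⊥) (hgb : ∀ z, g z ≠ ⊥) :
    LowerSemicontinuous (fun Z : E₁ × E₂ => f Z.1 + g Z.2) := by
  intro Z y hy
  induction y using EReal.rec with
  | bot => exact Filter.Eventually.of_forall fun W => Ne.bot_lt (add_ne_bot (hfb _) (hgb _))
  | top => exact absurd hy (by simp)
  | coe y =>
    obtain ⟨s₁, s₂, h₁, h₂, hs⟩ := exists_reals_lt_add (hfb _) (hgb _) hy
    have e₁ : ∀ᶠ W : E₁ × E₂ in 𝓝 Z, (s₁ : EReal) < f W.1 :=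
      continuousAt_fst.eventually (hf Z.1 _ h₁)
    have e₂ : ∀ᶠ W : E₁ × E₂ in 𝓝 Z, (s₂ : EReal) < g W.2 :=
      continuousAt_snd.eventually (hg Z.2 _ h₂)
    filter_upwards [e₁, e₂] with W w1 w2
    calc (y : EReal) < ((s₁ + s₂ : ℝ) : EReal) := by exact_mod_cast hs
      _ = (s₁ : EReal) + (s₂ : EReal) := EReal.coe_add s₁ s₂
      _ ≤ f W.1 + g W.2 := add_le_add w1.le w2.le

lemma lsc_indicator {E : Type*} [TopologicalSpace E] {K : Set E} (hK : IsClosed K) :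
    LowerSemicontinuous (fun z => if z ∈ K then (0 : EReal) else ⊤) := by
  intro z y hy
  by_cases hz : z ∈ K
  · have hy' : y < 0 := by simpa [hz] using hy
    refine Filter.Eventually.of_forall fun w => ?_
    by_cases hw : w ∈ K
    · simpa [hw] using hy'
    · simpa [hw] using hy'.trans_le le_top
  · have hy' : y < ⊤ := by simpa [hz] using hy
    have hmem : ∀ᶠ w in 𝓝 z, w ∈ Kᶜ := hK.isOpen_compl.mem_nhds hz
    filter_upwards [hmem] with w hw
    rw [Set.mem_compl_iff] at hw
    simpa [hw] using hy'

/-- Existence of a continuous affine minorant for a proper convex lsc function. -/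
lemma affine_minorant {E : Type*} [NormedAddCommGroup E] [NormedSpace ℝ E]
    {F : E → EReal} (hFb : ∀ z, F z ≠ ⊥)
    (hFc : ∀ z w : E, ∀ t r s : ℝ, 0 ≤ t → t ≤ 1 → F z ≤ (r : EReal) → F w ≤ (s : EReal) →
      F (t • z + (1 - t) • w) ≤ ((t * r + (1 - t) * s : ℝ) : EReal))
    (hFlsc : LowerSemicontinuous F)
    {z₀ : E} {r₀ : ℝ} (hz₀ : F z₀ = (r₀ : EReal)) :
    ∃ (ψ : E →L[ℝ] ℝ) (β : ℝ), ∀ z, ((ψ z + β : ℝ) : EReal) ≤ F z := by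
  classical
  set epi : Set (E × ℝ) := {p | F p.1 ≤ (p.2 : EReal)} with hepi
  have epiConv : Convex ℝ epi := by
    intro p hp q hq a b ha hb hab
    have hb' : b = 1 - a := by linarith
    have := hFc p.1 q.1 a p.2 q.2 ha (by linarith) hp hq
    subst hb'
    simpa [hepi, Prod.smul_fst, Prod.smul_snd, smul_eq_mul] using this
  have epiClosed : IsClosed epi := by
    rw [← isOpen_compl_iff, isOpen_iff_mem_nhds]
    intro p hp
    rw [Set.mem_compl_iff, hepi, Set.mem_setOf_eq, not_le] at hp
    obtain ⟨t', ht1, ht2⟩ : ∃ t' : ℝ, p.2 < t' ∧ (t' : EReal) < F p.1 := by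
      by_cases htop : F p.1 = ⊤
      · exact ⟨p.2 + 1, by linarith, by rw [htop]; exact EReal.coe_lt_top _⟩
      · obtain ⟨a, ha⟩ : ∃ a : ℝ, F p.1 = (a : EReal) :=
          ⟨(F p.1).toReal, (EReal.coe_toReal htop (hFb p.1)).symm⟩
        rw [ha, EReal.coe_lt_coe_iff] at hp
        exact ⟨(p.2 + a)/2, by linarith,
          by rw [ha]; exact_mod_cast (by linarith : (p.2+a)/2 < a)⟩
    have hev : ∀ᶠ x in 𝓝 p.1, (t' : EReal) < F x := hFlsc p.1 _ ht2
    rw [mem_nhds_prod_iff]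
    refine ⟨{x | (t' : EReal) < F x}, hev, Set.Iio t', Iio_mem_nhds ht1, ?_⟩
    rintro ⟨z, s⟩ ⟨hz, hs⟩
    simp only [Set.mem_compl_iff, hepi, Set.mem_setOf_eq, not_le]
    exact lt_trans (by exact_mod_cast hs) hz
  have hpt : (z₀, r₀ - 1) ∉ epi := by
    simp only [hepi, Set.mem_setOf_eq, hz₀, EReal.coe_le_coe_iff, not_le]
    linarith
  obtain ⟨Λ, α, hΛpt, hΛepi⟩ := geometric_hahn_banach_point_closed epiConv epiClosed hpt
  set φ : E →L[ℝ] ℝ := Λ.comp (ContinuousLinearMap.inl ℝ E ℝ) with hφ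
  set s₀ : ℝ := Λ (0, 1) with hs₀def
  have hdec : ∀ (u : E) (t : ℝ), Λ (u, t) = φ u + t * s₀ := by
    intro u t
    have h1 : (u, t) = (u, (0:ℝ)) + t • ((0 : E), (1:ℝ)) := by
      simp [Prod.ext_iff]
    rw [h1, map_add, map_smul, smul_eq_mul]
    rfl
  have hepi' : ∀ z (t : ℝ), F z ≤ (t : EReal) → α < φ z + t * s₀ := by
    intro z t hzt
    have := hΛepi (z, t) hzt
    rwa [hdec] at this
  have hs0 : 0 ≤ s₀ := by
    by_contra hs
    push_neg at hs
    set t := max r₀ ((φ z₀ - α + 1)/(-s₀)) with ht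
    have h1 : α < φ z₀ + t * s₀ :=
      hepi' z₀ t (by rw [hz₀]; exact_mod_cast le_max_left _ _)
    have h2 : (φ z₀ - α + 1) ≤ t * (-s₀) :=
      (div_le_iff₀ (neg_pos.2 hs)).mp (le_max_right _ _)
    linarith
  have hs0' : 0 < s₀ := by
    rcases eq_or_lt_of_le hs0 with h0 | h0
    · exfalso
      have h1 : α < φ z₀ + r₀ * s₀ := hepi' z₀ r₀ (le_of_eq hz₀)
      have h2 : Λ (z₀, r₀ - 1) < α := hΛpt
      rw [hdec] at h2
      nlinarith [h1, h2]
    · exact h0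
  refine ⟨(-(s₀⁻¹)) • φ, α / s₀, fun z => ?_⟩
  by_cases htop : F z = ⊤
  · rw [htop]; exact le_top
  · obtain ⟨t, ht⟩ : ∃ t : ℝ, F z = (t : EReal) :=
      ⟨(F z).toReal, (EReal.coe_toReal htop (hFb z)).symm⟩
    have h1 := hepi' z t (le_of_eq ht)
    rw [ht, EReal.coe_le_coe_iff, ContinuousLinearMap.smul_apply, smul_eq_mul]
    have e : -s₀⁻¹ * φ z + α / s₀ = (α - φ z) / s₀ := by field_simp; ring
    rw [e, div_le_iff₀ hs0']
    linarith


set_option maxHeartbeats 1000000 in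
/-- Key strong-duality / separation lemma: if `F + G > c` everywhere, with `G` having
bounded domain, then there is an affine separator. -/
lemma key_duality {E : Type*} [NormedAddCommGroup E] [NormedSpace ℝ E]
    [FiniteDimensional ℝ E]
    {F G : E → EReal}
    (hFb : ∀ z, F z ≠ ⊥) (hGb : ∀ z, G z ≠ ⊥)
    (hFc : ∀ z w : E, ∀ t r s : ℝ, 0 ≤ t → t ≤ 1 → F z ≤ (r : EReal) → F w ≤ (s : EReal) →
      F (t • z + (1 - t) • w) ≤ ((t * r + (1 - t) * s : ℝ) : EReal))
    (hGc : ∀ z w : E, ∀ t r s : ℝ, 0 ≤ t → t ≤ 1 → G z ≤ (r : EReal) → G w ≤ (s : EReal) →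
      G (t • z + (1 - t) • w) ≤ ((t * r + (1 - t) * s : ℝ) : EReal))
    (hFlsc : LowerSemicontinuous F) (hGlsc : LowerSemicontinuous G)
    {z₀ : E} {r₀ : ℝ} (hz₀ : F z₀ = (r₀ : EReal))
    {R : ℝ} (hGbd : ∀ z, G z ≠ ⊤ → ‖z‖ ≤ R)
    {c : ℝ} (hc : ∀ z, (c : EReal) < F z + G z) :
    ∃ (ψ : E →L[ℝ] ℝ) (β : ℝ), c < β ∧
      ∀ z w, ((ψ w - ψ z + β : ℝ) : EReal) ≤ F z + G w := by
  classical
  -- Step 1: a uniform bound on a small ball of shifts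
  have step1 : ∃ b r : ℝ, c < b ∧ 0 < r ∧
      ∀ u z : E, ‖u‖ < r → (b : EReal) < F z + G (z + u) := by
    by_contra hcon
    push_neg at hcon
    have hpos : ∀ k : ℕ, (0:ℝ) < 1/(k+1) := fun k => by positivity
    choose U Z hU hZ using fun k : ℕ =>
      hcon (c + 1/(k+1)) (1/(k+1)) (by linarith [hpos k]) (hpos k)
    have hZbd : ∀ k, Z k ∈ Metric.closedBall (0:E) (R+1) := by
      intro k
      have hGt : G (Z k + U k) ≠ ⊤ := by
        intro htop
        have := hZ k
        rw [htop, EReal.add_top_of_ne_bot (hFb _)] at this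
        exact (not_le.2 (EReal.coe_lt_top _)) this
      have h1 : ‖Z k + U k‖ ≤ R := hGbd _ hGt
      have h2 : ‖U k‖ ≤ 1 := by
        have := hU k
        have h3 : 1/((k:ℝ)+1) ≤ 1 := by
          rw [div_le_one (by positivity)]; linarith [Nat.cast_nonneg (α := ℝ) k]
        linarith
      rw [Metric.mem_closedBall, dist_zero_right]
      calc ‖Z k‖ = ‖(Z k + U k) - U k‖ := by rw [add_sub_cancel_right]
        _ ≤ ‖Z k + U k‖ + ‖U k‖ := norm_sub_le _ _
        _ ≤ R + 1 := by linarith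
    obtain ⟨zs, -, σ, hσmono, hσtend⟩ :=
      tendsto_subseq_of_bounded (Metric.isBounded_closedBall) hZbd
    have hU0 : Filter.Tendsto (fun k => U (σ k)) Filter.atTop (𝓝 0) := by
      rw [tendsto_zero_iff_norm_tendsto_zero]
      refine squeeze_zero (fun k => norm_nonneg _) (fun k => ?_) 
        tendsto_one_div_add_atTop_nhds_zero_nat
      have h1 : ‖U (σ k)‖ < 1/((σ k : ℝ)+1) := hU (σ k)
      have h2 : (1:ℝ)/((σ k : ℝ)+1) ≤ 1/((k:ℝ)+1) := by
        apply one_div_le_one_div_of_le (by positivity)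
        have h2b : k ≤ σ k := hσmono.le_apply
        have h2c : (k:ℝ) ≤ (σ k : ℝ) := Nat.cast_le.mpr h2b
        linarith
      linarith
    have hsum : Filter.Tendsto (fun k => Z (σ k) + U (σ k)) Filter.atTop (𝓝 zs) := by
      have := hσtend.add hU0
      simpa using this
    obtain ⟨s₁, s₂, hs1, hs2, hs12⟩ := exists_reals_lt_add (hFb zs) (hGb zs) (hc zs)
    have ev1 : ∀ᶠ k in Filter.atTop, (s₁ : EReal) < F (Z (σ k)) :=
      hσtend.eventually (hFlsc zs _ hs1)
    have ev2 : ∀ᶠ k in Filter.atTop, (s₂ : EReal) < G (Z (σ k) + U (σ k)) :=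
      hsum.eventually (hGlsc zs _ hs2)
    obtain ⟨K, hK⟩ := exists_nat_gt (1/(s₁+s₂-c))
    obtain ⟨k, ⟨hk1, hk2⟩, hk3⟩ := ((ev1.and ev2).and (Filter.eventually_ge_atTop K)).exists
    set m := σ k with hm
    have hmk : (K:ℝ) ≤ (m:ℝ) := by
      have h1 : k ≤ σ k := hσmono.le_apply
      exact_mod_cast le_trans hk3 h1
    have heps : 1/((m:ℝ)+1) < s₁+s₂-c := by
      have hK0 : (0:ℝ) < s₁+s₂-c := by linarith
      have h2 : 1/((m:ℝ)+1) ≤ 1/((K:ℝ)+1) := one_div_le_one_div_of_le (by positivity) (by linarith)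
      have h3 : 1/((K:ℝ)+1) < s₁+s₂-c := by
        rw [div_lt_iff₀ (by positivity)]
        rw [div_lt_iff₀ hK0] at hK
        nlinarith [hK0]
      linarith
    have hlt : ((s₁+s₂ : ℝ) : EReal) < ((c + 1/((m:ℝ)+1) : ℝ) : EReal) := by
      calc ((s₁+s₂ : ℝ) : EReal) = (s₁ : EReal) + (s₂ : EReal) := EReal.coe_add _ _
        _ < F (Z m) + G (Z m + U m) := EReal.add_lt_add hk1 hk2
        _ ≤ _ := hZ m
    rw [EReal.coe_lt_coe_iff] at hlt
    linarith
  obtain ⟨b, r, hcb, hr0, hball⟩ := step1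
  -- the "strict epigraph over shifts" set
  set S : Set (E × ℝ) := {p | ∃ z, F z + G (z + p.1) ≤ (p.2 : EReal)} with hSdef
  rcases Set.eq_empty_or_nonempty S with hSe | hSne
  · -- domain mismatch: conclusion is trivial
    refine ⟨0, c + 1, by linarith, fun z w => ?_⟩
    by_cases hFz : F z = ⊤
    · rw [hFz, EReal.top_add_of_ne_bot (hGb w)]; exact le_top
    by_cases hGw : G w = ⊤
    · rw [hGw, EReal.add_top_of_ne_bot (hFb z)]; exact le_top
    · exfalso
      obtain ⟨u, hu⟩ : ∃ u : ℝ, F z = (u : EReal) :=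
        ⟨(F z).toReal, (EReal.coe_toReal hFz (hFb z)).symm⟩
      obtain ⟨v, hv⟩ : ∃ v : ℝ, G w = (v : EReal) :=
        ⟨(G w).toReal, (EReal.coe_toReal hGw (hGb w)).symm⟩
      have hmem : (w - z, u + v) ∈ S := by
        refine ⟨z, ?_⟩
        rw [add_sub_cancel, hu, hv, ← EReal.coe_add]
      rw [hSe] at hmem
      exact hmem
  have Sconv : Convex ℝ S := by
    rintro p hp q hq a a' ha ha' haa
    obtain ⟨z₁, hz₁⟩ := hp
    obtain ⟨z₂, hz₂⟩ := hq
    have ha'' : a' = 1 - a := by linarith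
    subst ha''
    obtain ⟨u₁, v₁, e₁, e₂, huv₁⟩ := reals_of_add_le_coe (hFb z₁) (hGb _) hz₁
    obtain ⟨u₂, v₂, e₃, e₄, huv₂⟩ := reals_of_add_le_coe (hFb z₂) (hGb _) hz₂
    refine ⟨a • z₁ + (1-a) • z₂, ?_⟩
    have hF := hFc z₁ z₂ a u₁ u₂ ha (by linarith) (le_of_eq e₁) (le_of_eq e₃)
    have harg : a • z₁ + (1-a) • z₂ + (a • p + (1-a) • q).1
        = a • (z₁ + p.1) + (1-a) • (z₂ + q.1) := by
      have h1 : (a • p + (1-a) • q).1 = a • p.1 + (1-a) • q.1 := rfl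
      rw [h1, smul_add, smul_add]; abel
    have hG := hGc (z₁ + p.1) (z₂ + q.1) a v₁ v₂ ha (by linarith) (le_of_eq e₂) (le_of_eq e₄)
    rw [harg]
    have hsnd : (a • p + (1-a) • q).2 = a * p.2 + (1-a) * q.2 := rfl
    calc F (a • z₁ + (1-a) • z₂) + G (a • (z₁ + p.1) + (1-a) • (z₂ + q.1))
        ≤ ((a*u₁+(1-a)*u₂ : ℝ):EReal) + ((a*v₁+(1-a)*v₂ : ℝ):EReal) := add_le_add hF hG
      _ = (((a*u₁+(1-a)*u₂)+(a*v₁+(1-a)*v₂) : ℝ):EReal) := (EReal.coe_add _ _).symm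
      _ ≤ (((a • p + (1-a) • q).2 : ℝ) : EReal) := by
          rw [hsnd]
          exact EReal.coe_le_coe_iff.2 (by nlinarith)
  set Uo : Set (E × ℝ) := Metric.ball (0:E) r ×ˢ Set.Iio b with hUodef
  have hUoOpen : IsOpen Uo := (Metric.isOpen_ball).prod isOpen_Iio
  have hUoConv : Convex ℝ Uo := (convex_ball 0 r).prod (convex_Iio b)
  have hdisj : Disjoint Uo S := by
    rw [Set.disjoint_left]
    rintro ⟨u, t⟩ ⟨hu, ht⟩ ⟨z, hz⟩
    rw [Set.mem_Iio] at ht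
    rw [mem_ball_zero_iff] at hu
    have h1 := hball u z hu
    have h2 : (b : EReal) < (t : EReal) := lt_of_lt_of_le h1 hz
    rw [EReal.coe_lt_coe_iff] at h2
    linarith
  obtain ⟨Λ, α, hΛU, hΛS⟩ := geometric_hahn_banach_open hUoConv hUoOpen Sconv hdisj
  set φ : E →L[ℝ] ℝ := Λ.comp (ContinuousLinearMap.inl ℝ E ℝ) with hφdef
  set s₀ : ℝ := Λ (0, 1) with hs₀def
  have hdec : ∀ (u : E) (t : ℝ), Λ (u, t) = φ u + t * s₀ := by
    intro u t
    have h1 : (u, t) = (u, (0:ℝ)) + t • ((0 : E), (1:ℝ)) := by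
      simp [Prod.ext_iff]
    rw [h1, map_add, map_smul, smul_eq_mul]
    rfl
  have hS' : ∀ (z w : E) (u' v' : ℝ), F z = (u' : EReal) → G w = (v' : EReal) →
      α ≤ φ (w - z) + (u' + v') * s₀ := by
    intro z w u' v' hu hv
    have hmem : (w - z, u' + v') ∈ S := by
      refine ⟨z, ?_⟩
      rw [add_sub_cancel, hu, hv, ← EReal.coe_add]
    have := hΛS _ hmem
    rwa [hdec] at this
  have hU' : ∀ (u : E) (t : ℝ), ‖u‖ < r → t < b → φ u + t * s₀ < α := by
    intro u t hu ht
    have hmem : ((u, t) : E × ℝ) ∈ Uo := ⟨mem_ball_zero_iff.2 hu, Set.mem_Iio.2 ht⟩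
    have := hΛU _ hmem
    rwa [hdec] at this
  have hs₀0 : 0 ≤ s₀ := by
    by_contra hneg
    push_neg at hneg
    set t := min (b-1) (α/s₀ - 1) with htdef
    have h1 := hU' 0 t (by simpa using hr0) (by
      calc t ≤ b - 1 := min_le_left _ _
        _ < b := by linarith)
    rw [map_zero] at h1
    have h2 : t ≤ α/s₀ - 1 := min_le_right _ _
    have h3 : (α/s₀ - 1) * s₀ ≤ t * s₀ := mul_le_mul_of_nonpos_right h2 (le_of_lt hneg)
    have hs₀ne : s₀ ≠ 0 := ne_of_lt hneg
    have h4 : (α/s₀ - 1) * s₀ = α - s₀ := by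
      field_simp
    linarith
  have hbα : b * s₀ ≤ α := by
    by_contra hgt
    push_neg at hgt
    rcases eq_or_lt_of_le hs₀0 with h0 | h0
    · have h1 := hU' 0 (b-1) (by simpa using hr0) (by linarith)
      rw [map_zero, ← h0] at h1
      rw [← h0] at hgt
      nlinarith [h1, hgt]
    · have hs₀ne : s₀ ≠ 0 := ne_of_gt h0
      have hq : 0 < (b*s₀-α)/(2*s₀) := div_pos (by linarith) (by linarith)
      have h1 := hU' 0 (b - (b*s₀-α)/(2*s₀)) (by simpa using hr0) (by linarith)
      rw [map_zero] at h1
      have h2 : (b - (b*s₀-α)/(2*s₀)) * s₀ = (b*s₀+α)/2 := by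
        field_simp
        ring
      rw [h2] at h1
      linarith
  rcases eq_or_lt_of_le hs₀0 with hs0eq | hs0pos
  · -- vertical separation case : s₀ = 0
    have hSsep : ∀ (z w : E) (u' v' : ℝ), F z = (u' : EReal) → G w = (v' : EReal) →
        α ≤ φ (w - z) := by
      intro z w u' v' hu hv
      have := hS' z w u' v' hu hv
      rw [← hs0eq] at this
      simpa using this
    have hα : 0 < α := by
      have h1 := hU' 0 (b-1) (by simpa using hr0) (by linarith)
      rw [map_zero, ← hs0eq] at h1
      simpa using h1
    obtain ⟨ψF, βF, hmF⟩ := affine_minorant hFb hFc hFlsc hz₀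
    have hGlow : ∃ mG : ℝ, ∀ w, G w ≠ ⊤ → ((mG : ℝ) : EReal) ≤ G w := by
      by_contra hcon
      push_neg at hcon
      choose W hWt hWlt using fun k : ℕ => hcon (-(k:ℝ))
      have hWbd : ∀ k, W k ∈ Metric.closedBall (0:E) R := fun k =>
        Metric.mem_closedBall.2 (by rw [dist_zero_right]; exact hGbd _ (hWt k))
      obtain ⟨ws, -, σ, hσmono, hσtend⟩ :=
        tendsto_subseq_of_bounded (Metric.isBounded_closedBall) hWbd
      obtain ⟨s, hs⟩ : ∃ s : ℝ, (s : EReal) < G ws := by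
        by_cases htop : G ws = ⊤
        · exact ⟨0, by rw [htop]; exact EReal.coe_lt_top _⟩
        · obtain ⟨v, hv⟩ : ∃ v : ℝ, G ws = (v : EReal) :=
            ⟨(G ws).toReal, (EReal.coe_toReal htop (hGb ws)).symm⟩
          exact ⟨v - 1, by rw [hv]; exact_mod_cast (by linarith : v - 1 < v)⟩
      have ev := hσtend.eventually (hGlsc ws _ hs)
      obtain ⟨K, hK⟩ := exists_nat_gt (|s| + 1)
      obtain ⟨k, hkev, hkK⟩ := (ev.and (Filter.eventually_ge_atTop K)).exists
      have h1 : (s : EReal) < G (W (σ k)) := hkev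
      have h2 : G (W (σ k)) < ((-(σ k : ℝ) : ℝ) : EReal) := hWlt (σ k)
      have h3 : (s : EReal) < ((-(σ k : ℝ) : ℝ) : EReal) := lt_trans h1 h2
      rw [EReal.coe_lt_coe_iff] at h3
      have h4 : (K:ℝ) ≤ (σ k : ℝ) := by
        exact_mod_cast le_trans hkK hσmono.le_apply
      have h5 : |s| + 1 < (σ k : ℝ) := lt_of_lt_of_le hK h4
      have h6 : -s ≤ |s| := neg_le_abs s
      linarith
    obtain ⟨mG, hmG⟩ := hGlow
    set B : ℝ := βF + mG - ‖ψF‖ * R with hBdef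
    set lam : ℝ := max 0 ((c + 1 - B)/α) with hlamdef
    have hlam0 : 0 ≤ lam := le_max_left _ _
    have hlamB : c + 1 ≤ B + lam * α := by
      have h1 : (c + 1 - B)/α ≤ lam := le_max_right _ _
      have h2 : c + 1 - B ≤ lam * α := by
        rw [div_le_iff₀ hα] at h1
        linarith
      linarith
    refine ⟨-ψF - lam • φ, B + lam * α, by linarith, fun z w => ?_⟩
    by_cases hFz : F z = ⊤
    · rw [hFz, EReal.top_add_of_ne_bot (hGb w)]; exact le_top
    by_cases hGw : G w = ⊤
    · rw [hGw, EReal.add_top_of_ne_bot (hFb z)]; exact le_top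
    obtain ⟨u', hu⟩ : ∃ u : ℝ, F z = (u : EReal) :=
      ⟨(F z).toReal, (EReal.coe_toReal hFz (hFb z)).symm⟩
    obtain ⟨v', hv⟩ : ∃ v : ℝ, G w = (v : EReal) :=
      ⟨(G w).toReal, (EReal.coe_toReal hGw (hGb w)).symm⟩
    rw [hu, hv, ← EReal.coe_add, EReal.coe_le_coe_iff]
    have hb1 : ψF z + βF ≤ u' := by
      have := hmF z
      rw [hu, EReal.coe_le_coe_iff] at this
      linarith
    have hb2 : mG ≤ v' := by
      have := hmG w hGw
      rw [hv, EReal.coe_le_coe_iff] at this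
      linarith
    have hb3 : -(‖ψF‖ * R) ≤ ψF w := by
      have h1 : ‖ψF w‖ ≤ ‖ψF‖ * ‖w‖ := ψF.le_opNorm w
      have h2 : ‖w‖ ≤ R := hGbd w hGw
      have h3 : ‖ψF‖ * ‖w‖ ≤ ‖ψF‖ * R := mul_le_mul_of_nonneg_left h2 (norm_nonneg _)
      have h4 := neg_abs_le (ψF w)
      rw [Real.norm_eq_abs] at h1
      linarith
    have hsep := hSsep z w u' v' hu hv
    rw [map_sub] at hsep
    have hprod : lam * (α - (φ w - φ z)) ≤ 0 :=
      mul_nonpos_of_nonneg_of_nonpos hlam0 (by linarith)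
    have happ : ((-ψF - lam • φ) w) - ((-ψF - lam • φ) z)
        = -(ψF w) - lam * (φ w) + (ψF z) + lam * (φ z) := by
      simp [ContinuousLinearMap.sub_apply, ContinuousLinearMap.neg_apply,
        ContinuousLinearMap.smul_apply, smul_eq_mul]
      ring
    rw [happ]
    nlinarith [hb1, hb2, hb3, hprod]
  · -- nonvertical case : s₀ > 0
    refine ⟨(-(s₀⁻¹)) • φ, α / s₀, ?_, fun z w => ?_⟩
    · have h1 : b ≤ α / s₀ := (le_div_iff₀ hs0pos).2 (by linarith [hbα])
      linarith
    by_cases hFz : F z = ⊤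
    · rw [hFz, EReal.top_add_of_ne_bot (hGb w)]; exact le_top
    by_cases hGw : G w = ⊤
    · rw [hGw, EReal.add_top_of_ne_bot (hFb z)]; exact le_top
    obtain ⟨u', hu⟩ : ∃ u : ℝ, F z = (u : EReal) :=
      ⟨(F z).toReal, (EReal.coe_toReal hFz (hFb z)).symm⟩
    obtain ⟨v', hv⟩ : ∃ v : ℝ, G w = (v : EReal) :=
      ⟨(G w).toReal, (EReal.coe_toReal hGw (hGb w)).symm⟩
    rw [hu, hv, ← EReal.coe_add, EReal.coe_le_coe_iff]
    have hsep := hS' z w u' v' hu hv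
    rw [map_sub] at hsep
    have happ : ((-(s₀⁻¹)) • φ) w - ((-(s₀⁻¹)) • φ) z + α / s₀
        = (α - (φ w - φ z)) / s₀ := by
      have hs₀ne : s₀ ≠ 0 := ne_of_gt hs0pos
      simp only [ContinuousLinearMap.smul_apply, smul_eq_mul]
      field_simp
      ring
    rw [happ, div_le_iff₀ hs0pos]
    nlinarith [hsep]


lemma conj_pair_le {n : ℕ} {f g : (Fin n → ℝ) → EReal} {p q : Fin n → ℝ} {c : EReal}
    (h : ∀ x y, ((((∑ i, p i * x i : ℝ) : EReal) - f x) +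
      (((∑ i, q i * y i : ℝ) : EReal) - g y)) ≤ c) :
    conjE f p + conjE g q ≤ c :=
  iSup_add_iSup_le h

lemma le_conjE {n : ℕ} (f : (Fin n → ℝ) → EReal) (p x : Fin n → ℝ) :
    ((∑ i, p i * x i : ℝ) : EReal) - f x ≤ conjE f p :=
  le_iSup (fun x => ((∑ i, p i * x i : ℝ) : EReal) - f x) x

lemma le_conjE' {n : ℕ} (f : (Fin n → ℝ) → EReal) (p : Fin n → ℝ) {x : Fin n → ℝ} {r : ℝ}
    (h : f x = (r : EReal)) :
    ((((∑ i, p i * x i) - r : ℝ)) : EReal) ≤ conjE f p := by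
  have h2 := le_conjE f p x
  rw [h] at h2
  rwa [EReal.coe_sub]

lemma conjE_ne_bot {n : ℕ} (f : (Fin n → ℝ) → EReal) (p : Fin n → ℝ) {x : Fin n → ℝ} {r : ℝ}
    (h : f x = (r : EReal)) : conjE f p ≠ ⊥ := by
  intro hb
  have h2 := le_conjE' f p h
  rw [hb, le_bot_iff] at h2
  exact EReal.coe_ne_bot _ h2

lemma clm_pi_decomp {n : ℕ} (θ : (Fin n → ℝ) →L[ℝ] ℝ) (u : Fin n → ℝ) :
    θ u = ∑ i, u i * θ (fun j => if i = j then (1:ℝ) else 0) := by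
  conv_lhs => rw [pi_eq_sum_univ u]
  rw [map_sum]
  exact Finset.sum_congr rfl fun i _ => by rw [map_smul, smul_eq_mul]

end QPaux

set_option maxHeartbeats 1000000 in
/-- If `f` and `g` are convex, closed (lsc), proper functions on `ℝⁿ`, then
`f ≤_Q g` iff `g* ≤_P f*`. -/
theorem qle_iff_conj_ple {n : ℕ} (f g : (Fin n → ℝ) → EReal)
    (hf1 : ConvexE f) (hf2 : ProperE f) (hf3 : LowerSemicontinuous f)
    (hg1 : ConvexE g) (hg2 : ProperE g) (hg3 : LowerSemicontinuous g) :
    QleF f g ↔ PleF (conjE g) (conjE f) := by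
  classical
  constructor
  · -- forward direction
    intro hQ p p' hgp hfp'
    refine QPaux.conj_pair_le fun y' x' => ?_
    by_cases hgy : g y' = ⊤
    · rw [hgy, EReal.sub_top, EReal.bot_add]; exact bot_le
    by_cases hfx : f x' = ⊤
    · rw [hfx, EReal.sub_top, EReal.add_bot]; exact bot_le
    set δ₁ : Fin n → ℝ := fun i => if p' i < p i then posP (x' - y') i else 0 with hδ₁def
    have hδ₁0 : 0 ≤ δ₁ := by
      intro i
      simp only [hδ₁def, Pi.zero_apply]
      split
      · exact le_max_right _ _
      · exact le_refl 0
    have hδ₁le : δ₁ ≤ posP (x' - y') := by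
      intro i
      simp only [hδ₁def]
      split
      · exact le_refl _
      · exact le_max_right _ _
    obtain ⟨δ₂, hδ₂0, hδ₂le, hQle⟩ := hQ x' y' hfx hgy δ₁ hδ₁0 hδ₁le
    obtain ⟨rx, hrx⟩ : ∃ r : ℝ, f x' = (r : EReal) :=
      ⟨(f x').toReal, (EReal.coe_toReal hfx (hf2.1 x')).symm⟩
    obtain ⟨ry, hry⟩ : ∃ r : ℝ, g y' = (r : EReal) :=
      ⟨(g y').toReal, (EReal.coe_toReal hgy (hg2.1 y')).symm⟩
    have hsum := hQle
    rw [hrx, hry, ← EReal.coe_add] at hsum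
    obtain ⟨u, w, hXu, hYw, huw⟩ := QPaux.reals_of_add_le_coe (hf2.1 _) (hg2.1 _) hsum
    have hlin : (∑ i, (p ⊓ p') i * y' i) + (∑ i, (p ⊔ p') i * x' i)
        ≤ (∑ i, p i * (y' + δ₁ - δ₂) i) + (∑ i, p' i * (x' - δ₁ + δ₂) i) := by
      rw [← Finset.sum_add_distrib, ← Finset.sum_add_distrib]
      refine Finset.sum_le_sum fun i _ => ?_
      have hid := max_zero_sub_max_neg_zero_eq_self (x' i - y' i)
      have h2 := hδ₂0 i
      have h3 := hδ₂le i
      simp only [negP, Pi.sub_apply] at h3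
      simp only [Pi.inf_apply, Pi.sup_apply, Pi.add_apply, Pi.sub_apply]
      by_cases hpi : p' i < p i
      · have hδ : δ₁ i = max (x' i - y' i) 0 := by
          simp [hδ₁def, hpi, posP]
        rw [hδ, inf_eq_right.2 hpi.le, sup_eq_left.2 hpi.le]
        nlinarith [mul_nonneg (sub_nonneg.2 hpi.le)
          (by linarith : (0:ℝ) ≤ (max (x' i - y' i) 0 - δ₂ i) - (x' i - y' i))]
      · push_neg at hpi
        have hδ : δ₁ i = 0 := by simp [hδ₁def, not_lt.2 hpi]
        rw [hδ, inf_eq_left.2 hpi, sup_eq_right.2 hpi]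
        nlinarith [mul_nonneg (sub_nonneg.2 hpi) h2]
    rw [hry, hrx, ← EReal.coe_sub, ← EReal.coe_sub, ← EReal.coe_add]
    have hb1 := QPaux.le_conjE' g p hYw
    have hb2 := QPaux.le_conjE' f p' hXu
    calc ((((∑ i, (p ⊓ p') i * y' i) - ry) + (((∑ i, (p ⊔ p') i * x' i) - rx)) : ℝ) : EReal)
        ≤ ((((∑ i, p i * (y' + δ₁ - δ₂) i) - w) + ((∑ i, p' i * (x' - δ₁ + δ₂) i) - u) : ℝ) : EReal) := by
          rw [EReal.coe_le_coe_iff]; linarith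
      _ = ((((∑ i, p i * (y' + δ₁ - δ₂) i) - w : ℝ)) : EReal)
          + ((((∑ i, p' i * (x' - δ₁ + δ₂) i) - u : ℝ)) : EReal) := EReal.coe_add _ _
      _ ≤ conjE g p + conjE f p' := add_le_add hb1 hb2
  · -- backward direction
    intro hP x y hfx hgy δ₁ hδ₁0 hδ₁le
    by_contra hcon
    push_neg at hcon
    obtain ⟨rx, hrx⟩ : ∃ r : ℝ, f x = (r : EReal) :=
      ⟨(f x).toReal, (EReal.coe_toReal hfx (hf2.1 x)).symm⟩
    obtain ⟨ry, hry⟩ : ∃ r : ℝ, g y = (r : EReal) :=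
      ⟨(g y).toReal, (EReal.coe_toReal hgy (hg2.1 y)).symm⟩
    set v : Fin n → ℝ := negP (x - y) with hvdef
    have hv0 : (0 : Fin n → ℝ) ≤ v := by
      intro i
      simp only [hvdef, negP, Pi.zero_apply]
      exact le_max_right _ _
    set E2 := (Fin n → ℝ) × (Fin n → ℝ)
    set F : E2 → EReal := fun Z => f Z.1 + g Z.2 with hFdef
    set K : Set E2 := (fun δ => (x - δ₁ + δ, y + δ₁ - δ)) '' (Set.Icc 0 v) with hKdef
    set G : E2 → EReal := fun Z => if Z ∈ K then (0 : EReal) else ⊤ with hGdef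
    have hFb : ∀ Z, F Z ≠ ⊥ := fun Z => QPaux.add_ne_bot (hf2.1 _) (hg2.1 _)
    have hGb : ∀ Z, G Z ≠ ⊥ := by
      intro Z
      by_cases h : Z ∈ K
      · simp [hGdef, h]
      · simp [hGdef, h]
    have hFc : ∀ Z W : E2, ∀ t r s : ℝ, 0 ≤ t → t ≤ 1 → F Z ≤ (r : EReal) → F W ≤ (s : EReal) →
        F (t • Z + (1 - t) • W) ≤ ((t * r + (1 - t) * s : ℝ) : EReal) := by
      intro Z W t r s ht0 ht1 hZ hW
      obtain ⟨u₁, v₁, e₁, e₂, h₁⟩ := QPaux.reals_of_add_le_coe (hf2.1 Z.1) (hg2.1 Z.2) hZ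
      obtain ⟨u₂, v₂, e₃, e₄, h₂⟩ := QPaux.reals_of_add_le_coe (hf2.1 W.1) (hg2.1 W.2) hW
      have hff := hf1 Z.1 W.1 t ht0 ht1
      have hgg := hg1 Z.2 W.2 t ht0 ht1
      have b1 : (t : EReal) * f Z.1 ≤ ((t * u₁ : ℝ) : EReal) :=
        QPaux.coe_mul_le_of_le ht0 (le_of_eq e₁)
      have b2 : ((1 - t : ℝ) : EReal) * f W.1 ≤ (((1 - t) * u₂ : ℝ) : EReal) :=
        QPaux.coe_mul_le_of_le (by linarith) (le_of_eq e₃)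
      have b3 : (t : EReal) * g Z.2 ≤ ((t * v₁ : ℝ) : EReal) :=
        QPaux.coe_mul_le_of_le ht0 (le_of_eq e₂)
      have b4 : ((1 - t : ℝ) : EReal) * g W.2 ≤ (((1 - t) * v₂ : ℝ) : EReal) :=
        QPaux.coe_mul_le_of_le (by linarith) (le_of_eq e₄)
      have hF1 : f (t • Z.1 + (1 - t) • W.1) ≤ ((t * u₁ + (1 - t) * u₂ : ℝ) : EReal) := by
        refine le_trans hff ?_
        calc (t : EReal) * f Z.1 + ((1 - t : ℝ) : EReal) * f W.1
            ≤ ((t * u₁ : ℝ) : EReal) + (((1 - t) * u₂ : ℝ) : EReal) := add_le_add b1 b2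
          _ = ((t * u₁ + (1 - t) * u₂ : ℝ) : EReal) := (EReal.coe_add _ _).symm
      have hG1 : g (t • Z.2 + (1 - t) • W.2) ≤ ((t * v₁ + (1 - t) * v₂ : ℝ) : EReal) := by
        refine le_trans hgg ?_
        calc (t : EReal) * g Z.2 + ((1 - t : ℝ) : EReal) * g W.2
            ≤ ((t * v₁ : ℝ) : EReal) + (((1 - t) * v₂ : ℝ) : EReal) := add_le_add b3 b4
          _ = ((t * v₁ + (1 - t) * v₂ : ℝ) : EReal) := (EReal.coe_add _ _).symm
      have hfst : (t • Z + (1 - t) • W).1 = t • Z.1 + (1 - t) • W.1 := rfl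
      have hsnd : (t • Z + (1 - t) • W).2 = t • Z.2 + (1 - t) • W.2 := rfl
      rw [hFdef]
      show f (t • Z + (1 - t) • W).1 + g (t • Z + (1 - t) • W).2 ≤ _
      rw [hfst, hsnd]
      calc f (t • Z.1 + (1 - t) • W.1) + g (t • Z.2 + (1 - t) • W.2)
          ≤ ((t * u₁ + (1 - t) * u₂ : ℝ) : EReal) + ((t * v₁ + (1 - t) * v₂ : ℝ) : EReal) :=
            add_le_add hF1 hG1
        _ = (((t * u₁ + (1 - t) * u₂) + (t * v₁ + (1 - t) * v₂) : ℝ) : EReal) :=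
            (EReal.coe_add _ _).symm
        _ ≤ ((t * r + (1 - t) * s : ℝ) : EReal) := by
            rw [EReal.coe_le_coe_iff]
            nlinarith
    have hKconv : Convex ℝ K := by
      rintro _ ⟨δa, hδa, rfl⟩ _ ⟨δb, hδb, rfl⟩ t t' ht ht' htt
      rw [Set.mem_Icc] at hδa hδb
      refine ⟨t • δa + t' • δb, Set.mem_Icc.2 ⟨?_, ?_⟩, ?_⟩
      · intro i
        have h1 := hδa.1 i
        have h2 := hδb.1 i
        simp only [Pi.add_apply, Pi.smul_apply, smul_eq_mul, Pi.zero_apply] at h1 h2 ⊢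
        nlinarith [mul_nonneg ht h1, mul_nonneg ht' h2]
      · intro i
        have h1 := hδa.2 i
        have h2 := hδb.2 i
        simp only [Pi.add_apply, Pi.smul_apply, smul_eq_mul] at h1 h2 ⊢
        have h3 : t * v i + t' * v i = v i := by rw [← add_mul, htt, one_mul]
        nlinarith [mul_nonneg ht (sub_nonneg.2 h1), mul_nonneg ht' (sub_nonneg.2 h2)]
      · have hca : t • (x - δ₁) + t' • (x - δ₁) = x - δ₁ := Convex.combo_self htt _
        have hcb : t • (y + δ₁) + t' • (y + δ₁) = y + δ₁ := Convex.combo_self htt _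
        have h1 : t • (x - δ₁ + δa) + t' • (x - δ₁ + δb) = x - δ₁ + (t • δa + t' • δb) := by
          rw [smul_add, smul_add]
          rw [show t • (x - δ₁) + t • δa + (t' • (x - δ₁) + t' • δb)
            = (t • (x - δ₁) + t' • (x - δ₁)) + (t • δa + t' • δb) by abel, hca]
        have h2 : t • (y + δ₁ - δa) + t' • (y + δ₁ - δb) = y + δ₁ - (t • δa + t' • δb) := by
          rw [smul_sub, smul_sub]
          rw [show t • (y + δ₁) - t • δa + (t' • (y + δ₁) - t' • δb)
            = (t • (y + δ₁) + t' • (y + δ₁)) - (t • δa + t' • δb) by abel, hcb]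
        show (x - δ₁ + (t • δa + t' • δb), y + δ₁ - (t • δa + t' • δb))
          = t • ((x - δ₁ + δa, y + δ₁ - δa) : E2) + t' • (x - δ₁ + δb, y + δ₁ - δb)
        rw [Prod.smul_mk, Prod.smul_mk, Prod.mk_add_mk, h1, h2]
    have hGc : ∀ Z W : E2, ∀ t r s : ℝ, 0 ≤ t → t ≤ 1 → G Z ≤ (r : EReal) → G W ≤ (s : EReal) →
        G (t • Z + (1 - t) • W) ≤ ((t * r + (1 - t) * s : ℝ) : EReal) := by
      intro Z W t r s ht0 ht1 hZ hW
      have hZK : Z ∈ K := by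
        by_contra h
        rw [hGdef] at hZ
        simp only [if_neg h] at hZ
        exact (not_le.2 (EReal.coe_lt_top r)) hZ
      have hWK : W ∈ K := by
        by_contra h
        rw [hGdef] at hW
        simp only [if_neg h] at hW
        exact (not_le.2 (EReal.coe_lt_top s)) hW
      have hr0 : (0:ℝ) ≤ r := by
        rw [hGdef] at hZ
        simp only [if_pos hZK] at hZ
        exact_mod_cast hZ
      have hs0 : (0:ℝ) ≤ s := by
        rw [hGdef] at hW
        simp only [if_pos hWK] at hW
        exact_mod_cast hW
      have hmem : t • Z + (1 - t) • W ∈ K := hKconv hZK hWK ht0 (by linarith) (by ring)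
      rw [hGdef]
      simp only [if_pos hmem]
      exact_mod_cast (by nlinarith : (0:ℝ) ≤ t * r + (1 - t) * s)
    have hFlsc : LowerSemicontinuous F := by
      rw [hFdef]
      exact QPaux.lsc_pair hf3 hg3 hf2.1 hg2.1
    have hcont : Continuous (fun δ : Fin n → ℝ => ((x - δ₁ + δ, y + δ₁ - δ) : E2)) :=
      (continuous_const.add continuous_id).prodMk (continuous_const.sub continuous_id)
    have hKcomp : IsCompact K := (isCompact_Icc).image hcont
    have hGlsc : LowerSemicontinuous G := by
      rw [hGdef]
      exact QPaux.lsc_indicator hKcomp.isClosed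
    have hz₀ : F ((x, y) : E2) = ((rx + ry : ℝ) : EReal) := by
      rw [hFdef]
      show f x + g y = _
      rw [hrx, hry, ← EReal.coe_add]
    obtain ⟨R, hR⟩ := hKcomp.isBounded.subset_closedBall 0
    have hGbd : ∀ Z, G Z ≠ ⊤ → ‖Z‖ ≤ R := by
      intro Z hZ
      have hZK : Z ∈ K := by
        by_contra h
        rw [hGdef] at hZ
        simp only [if_neg h] at hZ
        exact hZ rfl
      have := hR hZK
      rwa [Metric.mem_closedBall, dist_zero_right] at this
    have hc : ∀ Z : E2, (((rx + ry : ℝ)) : EReal) < F Z + G Z := by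
      intro Z
      by_cases hZK : Z ∈ K
      · obtain ⟨δ, hδIcc, rfl⟩ := hZK
        rw [Set.mem_Icc] at hδIcc
        have hlt := hcon δ hδIcc.1 hδIcc.2
        rw [hrx, hry, ← EReal.coe_add] at hlt
        have hG0 : G ((x - δ₁ + δ, y + δ₁ - δ) : E2) = 0 :=
          if_pos ⟨δ, Set.mem_Icc.2 hδIcc, rfl⟩
        rw [hG0, add_zero]
        exact hlt
      · have hGt : G Z = ⊤ := if_neg hZK
        rw [hGt, EReal.add_top_of_ne_bot (hFb Z)]
        exact EReal.coe_lt_top _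
    obtain ⟨ψ, β, hβ, hsep⟩ :=
      QPaux.key_duality hFb hGb hFc hGc hFlsc hGlsc hz₀ hGbd hc
    set e : Fin n → (Fin n → ℝ) := fun i => fun j => if i = j then (1:ℝ) else 0 with hedef
    set p' : Fin n → ℝ := fun i => -ψ ((e i, 0) : E2) with hp'def
    set p : Fin n → ℝ := fun i => -ψ ((0, e i) : E2) with hpdef
    have hψ : ∀ z w : Fin n → ℝ, ψ ((z, w) : E2) = -(∑ i, p' i * z i) - (∑ i, p i * w i) := by
      intro z w
      have hzw : ((z, w) : E2) = (z, 0) + (0, w) := by simp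
      rw [hzw, map_add]
      have h1 : ψ ((z, (0 : Fin n → ℝ)) : E2) = ∑ i, z i * ψ ((e i, 0) : E2) := by
        have h := QPaux.clm_pi_decomp (ψ.comp (ContinuousLinearMap.inl ℝ (Fin n → ℝ) (Fin n → ℝ))) z
        exact h
      have h2 : ψ (((0 : Fin n → ℝ), w) : E2) = ∑ i, w i * ψ ((0, e i) : E2) := by
        have h := QPaux.clm_pi_decomp (ψ.comp (ContinuousLinearMap.inr ℝ (Fin n → ℝ) (Fin n → ℝ))) w
        exact h
      rw [h1, h2, hp'def, hpdef]
      simp only [neg_mul, neg_neg, Finset.sum_neg_distrib, sub_neg_eq_add, neg_add_eq_sub]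
      congr 1 <;> exact Finset.sum_congr rfl fun i _ => mul_comm _ _
    set δs : Fin n → ℝ := fun i => if p' i < p i then v i else 0 with hδsdef
    have hδs : δs ∈ Set.Icc (0 : Fin n → ℝ) v := by
      refine Set.mem_Icc.2 ⟨fun i => ?_, fun i => ?_⟩
      · simp only [hδsdef, Pi.zero_apply]
        split
        · exact hv0 i
        · exact le_refl 0
      · simp only [hδsdef]
        split
        · exact le_refl _
        · exact hv0 i
    set M : ℝ := (∑ i, p' i * (x - δ₁ + δs) i) + (∑ i, p i * (y + δ₁ - δs) i) - β with hMdef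
    have hkey : ∀ (z w : Fin n → ℝ) (u' v' : ℝ), f z = (u' : EReal) → g w = (v' : EReal) →
        ((∑ i, p' i * z i) - u') + ((∑ i, p i * w i) - v') ≤ M := by
      intro z w u' v' hfz hgw
      have hs := hsep ((z, w) : E2) ((x - δ₁ + δs, y + δ₁ - δs) : E2)
      have hGW : G ((x - δ₁ + δs, y + δ₁ - δs) : E2) = 0 := if_pos ⟨δs, hδs, rfl⟩
      have hFZ : F ((z, w) : E2) = ((u' + v' : ℝ) : EReal) := by
        rw [hFdef]
        show f z + g w = _
        rw [hfz, hgw, ← EReal.coe_add]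
      rw [hGW, add_zero, hFZ, hψ, hψ, EReal.coe_le_coe_iff] at hs
      rw [hMdef]
      linarith
    have hconj : conjE f p' + conjE g p ≤ ((M : ℝ) : EReal) := by
      refine QPaux.conj_pair_le fun z w => ?_
      by_cases hfz : f z = ⊤
      · rw [hfz, EReal.sub_top, EReal.bot_add]; exact bot_le
      by_cases hgw : g w = ⊤
      · rw [hgw, EReal.sub_top, EReal.add_bot]; exact bot_le
      obtain ⟨u', hu'⟩ : ∃ r : ℝ, f z = (r : EReal) :=
        ⟨(f z).toReal, (EReal.coe_toReal hfz (hf2.1 z)).symm⟩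
      obtain ⟨v', hv'⟩ : ∃ r : ℝ, g w = (r : EReal) :=
        ⟨(g w).toReal, (EReal.coe_toReal hgw (hg2.1 w)).symm⟩
      rw [hu', hv', ← EReal.coe_sub, ← EReal.coe_sub, ← EReal.coe_add, EReal.coe_le_coe_iff]
      exact hkey z w u' v' hu' hv'
    have hbf : conjE f p' ≠ ⊥ := QPaux.conjE_ne_bot f p' hrx
    have hbg : conjE g p ≠ ⊥ := QPaux.conjE_ne_bot g p hry
    have hft : conjE f p' ≠ ⊤ := QPaux.ne_top_of_add_le_coe_left hbg hconj
    have hgt : conjE g p ≠ ⊤ := QPaux.ne_top_of_add_le_coe_left hbf (by rwa [add_comm] at hconj)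
    have hPP := hP p p' hgt hft
    have hl1 := QPaux.le_conjE' g (p ⊓ p') hry
    have hl2 := QPaux.le_conjE' f (p ⊔ p') hrx
    have hchain : ((((∑ i, (p ⊓ p') i * y i) - ry) + (((∑ i, (p ⊔ p') i * x i) - rx)) : ℝ) : EReal)
        ≤ ((M : ℝ) : EReal) := by
      calc ((((∑ i, (p ⊓ p') i * y i) - ry) + (((∑ i, (p ⊔ p') i * x i) - rx)) : ℝ) : EReal)
          = ((((∑ i, (p ⊓ p') i * y i) - ry : ℝ)) : EReal)
            + ((((∑ i, (p ⊔ p') i * x i) - rx : ℝ)) : EReal) := EReal.coe_add _ _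
        _ ≤ conjE g (p ⊓ p') + conjE f (p ⊔ p') := add_le_add hl1 hl2
        _ ≤ conjE g p + conjE f p' := hPP
        _ = conjE f p' + conjE g p := add_comm _ _
        _ ≤ ((M : ℝ) : EReal) := hconj
    rw [EReal.coe_le_coe_iff] at hchain
    have hsumb : (∑ i, p' i * (x - δ₁ + δs) i) + (∑ i, p i * (y + δ₁ - δs) i)
        ≤ (∑ i, (p ⊓ p') i * y i) + (∑ i, (p ⊔ p') i * x i) := by
      rw [← Finset.sum_add_distrib, ← Finset.sum_add_distrib]
      refine Finset.sum_le_sum fun i _ => ?_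
      have hid := max_zero_sub_max_neg_zero_eq_self (x i - y i)
      have h10 := hδ₁0 i
      have h1le := hδ₁le i
      simp only [posP, Pi.sub_apply] at h1le
      simp only [Pi.inf_apply, Pi.sup_apply, Pi.add_apply, Pi.sub_apply]
      by_cases hpi : p' i < p i
      · have hδ : δs i = v i := by simp [hδsdef, hpi]
        have hvi : v i = max (-(x i - y i)) 0 := by simp [hvdef, negP]
        rw [hδ, inf_eq_right.2 hpi.le, sup_eq_left.2 hpi.le]
        nlinarith [mul_nonneg (sub_nonneg.2 hpi.le)
          (by rw [hvi]; linarith : (0:ℝ) ≤ (x i - y i) - (δ₁ i - v i))]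
      · push_neg at hpi
        have hδ : δs i = 0 := by simp [hδsdef, not_lt.2 hpi]
        rw [hδ, inf_eq_left.2 hpi, sup_eq_right.2 hpi]
        nlinarith [mul_nonneg (sub_nonneg.2 hpi) h10]
    rw [hMdef] at hchain
    linarith
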